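/- Let ρ be a smooth 1-form on ℝ² with div ρ^♯ = 0, so that there exists a potential f with ρ₂ = ∂f/∂u¹ and ρ₁ = −∂f/∂u². Then along any curve c, the ∇-parallel vector fields are exactly X(t) = r₀(cos(φ(t)+φ₀), −sin(φ(t)+φ₀)) with φ = f∘c and constants r₀ ≥ 0, φ₀ ∈ ℝ. Consequently, for any closed curve c (c(0) = c(1)) the ∇-holonomy is trivial: X(0) = X(1). -/

import Mathlib

/-- Let `ρ` be a 1-form on the Euclidean plane with `div ρ^♯ = 0`, so that there
is a potential `f` with `ρ₂ = ∂f/∂u¹` and `ρ₁ = −∂f/∂u²`. Then, along any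
curve `c`, the parallel vector fields of the semi-symmetric metric connection
`∇` determined by `ρ` are exactly the rotating fields
`X(t) = r₀(cos(φ(t)+φ₀), −sin(φ(t)+φ₀))` with `φ = f∘c`; consequently the
`∇`-holonomy along any closed curve is trivial. -/
theorem stmt13 (ρ1 ρ2 : (Fin 2 → ℝ) → ℝ) (f : (Fin 2 → ℝ) → ℝ)
    (hf : ContDiff ℝ 1 f)
    (hρ2 : ∀ u, ρ2 u = fderiv ℝ f u (Pi.single 0 1))
    (hρ1 : ∀ u, ρ1 u = -fderiv ℝ f u (Pi.single 1 1))
    (c1 c2 X1 X2 : ℝ → ℝ)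
    (hc1 : ContDiff ℝ 1 c1) (hc2 : ContDiff ℝ 1 c2)
    (hX1 : Differentiable ℝ X1) (hX2 : Differentiable ℝ X2) :
    ((∀ t, deriv X1 t = X2 t * (deriv c1 t * ρ2 ![c1 t, c2 t] - deriv c2 t * ρ1 ![c1 t, c2 t]) ∧
        deriv X2 t = X1 t * (deriv c2 t * ρ1 ![c1 t, c2 t] - deriv c1 t * ρ2 ![c1 t, c2 t]))
      ↔
      ∃ r0 : ℝ, 0 ≤ r0 ∧ ∃ φ0 : ℝ, ∀ t,
        X1 t = r0 * Real.cos (f ![c1 t, c2 t] + φ0) ∧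
        X2 t = -(r0 * Real.sin (f ![c1 t, c2 t] + φ0))) ∧
    ((c1 0 = c1 1 ∧ c2 0 = c2 1) →
      (∀ t, deriv X1 t = X2 t * (deriv c1 t * ρ2 ![c1 t, c2 t] - deriv c2 t * ρ1 ![c1 t, c2 t]) ∧
        deriv X2 t = X1 t * (deriv c2 t * ρ1 ![c1 t, c2 t] - deriv c1 t * ρ2 ![c1 t, c2 t])) →
      X1 0 = X1 1 ∧ X2 0 = X2 1) := by
  have hfd : Differentiable ℝ f := hf.differentiable one_ne_zero
  set φ : ℝ → ℝ := fun t => f ![c1 t, c2 t] with hφdef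
  set ψ : ℝ → ℝ := fun t =>
    deriv c1 t * ρ2 ![c1 t, c2 t] - deriv c2 t * ρ1 ![c1 t, c2 t] with hψdef
  -- chain rule: φ' = ψ
  have hφ : ∀ t, HasDerivAt φ (ψ t) t := by
    intro t
    have hg : HasDerivAt (fun t => (![c1 t, c2 t] : Fin 2 → ℝ)) ![deriv c1 t, deriv c2 t] t := by
      rw [hasDerivAt_pi]
      intro i
      fin_cases i
      · simpa using (hc1.differentiable one_ne_zero t).hasDerivAt
      · simpa using (hc2.differentiable one_ne_zero t).hasDerivAt
    have h1 := (hfd ![c1 t, c2 t]).hasFDerivAt.comp_hasDerivAt t hg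
    refine h1.congr_deriv ?_
    have hv : (![deriv c1 t, deriv c2 t] : Fin 2 → ℝ)
        = deriv c1 t • (Pi.single 0 1 : Fin 2 → ℝ)
          + deriv c2 t • (Pi.single 1 1 : Fin 2 → ℝ) := by
      funext i; fin_cases i <;> simp
    rw [hv, map_add, (fderiv ℝ f _).map_smul, (fderiv ℝ f _).map_smul]
    simp only [hψdef, hρ1, hρ2, smul_eq_mul]
    ring
  -- the main equivalence
  have main : (∀ t, deriv X1 t = X2 t * ψ t ∧ deriv X2 t = X1 t * (-ψ t))
      ↔ ∃ r0 : ℝ, 0 ≤ r0 ∧ ∃ φ0 : ℝ, ∀ t,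
        X1 t = r0 * Real.cos (φ t + φ0) ∧ X2 t = -(r0 * Real.sin (φ t + φ0)) := by
    constructor
    · intro h
      have hX1' : ∀ t, HasDerivAt X1 (X2 t * ψ t) t := fun t => by
        have := (hX1 t).hasDerivAt; rwa [(h t).1] at this
      have hX2' : ∀ t, HasDerivAt X2 (-(X1 t * ψ t)) t := fun t => by
        have := (hX2 t).hasDerivAt
        rw [(h t).2] at this; exact this.congr_deriv (by ring)
      set A : ℝ → ℝ := fun t => X1 t * Real.cos (φ t) - X2 t * Real.sin (φ t) with hAdef
      set B : ℝ → ℝ := fun t => X1 t * Real.sin (φ t) + X2 t * Real.cos (φ t) with hBdef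
      have hA' : ∀ t, HasDerivAt A 0 t := by
        intro t
        have := ((hX1' t).mul ((hφ t).cos)).sub ((hX2' t).mul ((hφ t).sin))
        exact this.congr_deriv (by ring)
      have hB' : ∀ t, HasDerivAt B 0 t := by
        intro t
        have := ((hX1' t).mul ((hφ t).sin)).add ((hX2' t).mul ((hφ t).cos))
        exact this.congr_deriv (by ring)
      have hA : ∀ t, A t = A 0 := fun t =>
        is_const_of_deriv_eq_zero (fun s => (hA' s).differentiableAt)
          (fun s => (hA' s).deriv) t 0
      have hB : ∀ t, B t = B 0 := fun t =>
        is_const_of_deriv_eq_zero (fun s => (hB' s).differentiableAt)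
          (fun s => (hB' s).deriv) t 0
      set a := A 0 with hadef
      set b := B 0 with hbdef
      have hX1v : ∀ t, X1 t = a * Real.cos (φ t) + b * Real.sin (φ t) := by
        intro t
        have h1 := hA t; have h2 := hB t
        have h3 := Real.sin_sq_add_cos_sq (φ t)
        simp only [hAdef, hBdef] at h1 h2
        linear_combination Real.cos (φ t) * h1 + Real.sin (φ t) * h2 - X1 t * h3
      have hX2v : ∀ t, X2 t = -a * Real.sin (φ t) + b * Real.cos (φ t) := by
        intro t
        have h1 := hA t; have h2 := hB t
        have h3 := Real.sin_sq_add_cos_sq (φ t)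
        simp only [hAdef, hBdef] at h1 h2
        linear_combination -Real.sin (φ t) * h1 + Real.cos (φ t) * h2 - X2 t * h3
      by_cases h0 : a = 0 ∧ b = 0
      · refine ⟨0, le_rfl, 0, fun t => ?_⟩
        rw [hX1v t, hX2v t, h0.1, h0.2]; norm_num
      · set z : ℂ := ⟨a, -b⟩ with hzdef
        have hz : z ≠ 0 := by
          simp only [hzdef, ne_eq, Complex.ext_iff, Complex.zero_re, Complex.zero_im]
          intro hc
          exact h0 ⟨hc.1, by linarith [hc.2]⟩
        have habs : ‖z‖ ≠ 0 := (norm_ne_zero_iff.mpr hz)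
        have hcos : Real.cos (Complex.arg z) = a / ‖z‖ := by
          rw [Complex.cos_arg hz]
        have hsin : Real.sin (Complex.arg z) = -b / ‖z‖ := by
          rw [Complex.sin_arg]
        refine ⟨‖z‖, norm_nonneg z, Complex.arg z, fun t => ?_⟩
        constructor
        · rw [hX1v t, Real.cos_add, hcos, hsin]
          field_simp
          ring
        · rw [hX2v t, Real.sin_add, hcos, hsin]
          field_simp
          ring
    · rintro ⟨r0, hr0, φ0, hX⟩
      intro t
      have hX1f : X1 = fun t => r0 * Real.cos (φ t + φ0) := funext fun t => (hX t).1
      have hX2f : X2 = fun t => -(r0 * Real.sin (φ t + φ0)) := funext fun t => (hX t).2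
      have hd1 : HasDerivAt (fun t => r0 * Real.cos (φ t + φ0))
          (r0 * (-Real.sin (φ t + φ0) * ψ t)) t :=
        (((hφ t).add_const φ0).cos).const_mul r0
      have hd2 : HasDerivAt (fun t => -(r0 * Real.sin (φ t + φ0)))
          (-(r0 * (Real.cos (φ t + φ0) * ψ t))) t :=
        ((((hφ t).add_const φ0).sin).const_mul r0).neg
      constructor
      · rw [hX1f, hd1.deriv, hX2f]; ring
      · rw [hX2f, hd2.deriv, hX1f]; ring
  constructor
  · constructor
    · intro h
      exact main.mp (fun t => ⟨(h t).1, by rw [(h t).2]; ring⟩)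
    · intro h t
      have := main.mpr h t
      exact ⟨this.1, by rw [this.2]; ring⟩
  · intro hclosed h
    obtain ⟨r0, hr0, φ0, hX⟩ := main.mp (fun t => ⟨(h t).1, by rw [(h t).2]; ring⟩)
    have hφ01 : φ 0 = φ 1 := by
      simp only [hφdef]
      congr 1
      funext i; fin_cases i <;> simp [hclosed.1, hclosed.2]
    constructor
    · rw [(hX 0).1, (hX 1).1, hφ01]
    · rw [(hX 0).2, (hX 1).2, hφ01]
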